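/- Relaxation exactness: in the optimization problem of minimizing Σᵢ (N0/hᵢ)·xᵢ·tᵢ·(2^(Lᵢ/(xᵢtᵢ)) − 1) subject to Σᵢ xᵢ = B and Σ_{i∈Sⱼ} Wᵢ/(Dᵢ − tᵢ) ≤ Cⱼ (0 < tᵢ < Dᵢ), any optimal solution satisfies the computing constraint with equality: Σ_{i∈Sⱼ} Wᵢ/(Dᵢ − tᵢ) = Cⱼ for every j. -/

import Mathlib

lemma slope_exp {t u : ℝ} (ht : 0 < t) (htu : t < u) :
    (Real.exp t - 1) / t < (Real.exp u - 1) / u := by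
  have hu : 0 < u := ht.trans htu
  set r : ℝ := t / u with hr
  have hr0 : 0 < r := div_pos ht hu
  have hr1 : r < 1 := (div_lt_one hu).2 htu
  have hconv := strictConvexOn_exp.2 (Set.mem_univ (0:ℝ)) (Set.mem_univ u)
    (by linarith : (0:ℝ) ≠ u) (by linarith : 0 < 1 - r) hr0 (by ring)
  simp only [smul_eq_mul, mul_zero, zero_add, Real.exp_zero, mul_one] at hconv
  have ht' : r * u = t := by rw [hr, div_mul_cancel₀ t hu.ne']
  rw [ht'] at hconv
  rw [div_lt_div_iff₀ ht hu]
  nlinarith [Real.exp_pos u]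

lemma key (b : ℝ) (hb : 0 < b) {u v : ℝ} (hu : 0 < u) (huv : u < v) :
    v * ((2:ℝ) ^ (b/v) - 1) < u * ((2:ℝ) ^ (b/u) - 1) := by
  have hv : 0 < v := hu.trans huv
  have h2 : (0:ℝ) < 2 := by norm_num
  rw [Real.rpow_def_of_pos h2, Real.rpow_def_of_pos h2]
  set c : ℝ := b * Real.log 2 with hc
  have hc0 : 0 < c := mul_pos hb (Real.log_pos (by norm_num))
  have e1 : Real.log 2 * (b / u) = c / u := by rw [hc]; ring
  have e2 : Real.log 2 * (b / v) = c / v := by rw [hc]; ring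
  rw [e1, e2]
  have hlt : (Real.exp (c/v) - 1) / (c/v) < (Real.exp (c/u) - 1) / (c/u) :=
    slope_exp (div_pos hc0 hv) (by
      exact div_lt_div_of_pos_left hc0 hu huv)
  have h1 : v * (Real.exp (c/v) - 1) = c * ((Real.exp (c/v) - 1) / (c/v)) := by
    field_simp
  have h2' : u * (Real.exp (c/u) - 1) = c * ((Real.exp (c/u) - 1) / (c/u)) := by
    field_simp
  rw [h1, h2']
  exact mul_lt_mul_of_pos_left hlt hc0

/-- Relaxation exactness: any optimal solution of the relaxed problem satisfies the
computing-capacity constraints with equality. -/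
theorem stmt10 {ι J : Type*} [Fintype ι] [Fintype J] [DecidableEq J] (s : ι → J)
    (hs : ∀ j, ∃ i, s i = j)
    (N0 B : ℝ) (h L W D : ι → ℝ) (C : J → ℝ)
    (hN0 : 0 < N0) (hB : 0 < B) (hh : ∀ i, 0 < h i) (hL : ∀ i, 0 < L i)
    (hW : ∀ i, 0 < W i) (hD : ∀ i, 0 < D i) (hC : ∀ j, 0 < C j)
    (S : Set ((ι → ℝ) × (ι → ℝ)))
    (hS : S = {p | (∀ i, 0 < p.1 i) ∧ (∀ i, 0 < p.2 i ∧ p.2 i < D i) ∧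
        (∑ i, p.1 i = B) ∧
        ∀ j, ∑ i ∈ Finset.univ.filter (fun i => s i = j), W i / (D i - p.2 i) ≤ C j})
    (F : (ι → ℝ) × (ι → ℝ) → ℝ)
    (hF : F = fun p => ∑ i, (N0 / h i) *
      (p.1 i * p.2 i * ((2 : ℝ) ^ (L i / (p.1 i * p.2 i)) - 1)))
    (p : (ι → ℝ) × (ι → ℝ)) (hp : p ∈ S) (hopt : ∀ q ∈ S, F p ≤ F q) :
    ∀ j, ∑ i ∈ Finset.univ.filter (fun i => s i = j), W i / (D i - p.2 i) = C j := by
  classical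
  rw [hS] at hp
  obtain ⟨hx, ht, hsum, hcon⟩ := hp
  intro j
  by_contra hne
  have hlt : ∑ i ∈ Finset.univ.filter (fun i => s i = j), W i / (D i - p.2 i) < C j :=
    lt_of_le_of_ne (hcon j) hne
  set Sig0 := ∑ i ∈ Finset.univ.filter (fun i => s i = j), W i / (D i - p.2 i) with hSig0
  set δ := C j - Sig0 with hδ
  have hδ0 : 0 < δ := by simp [hδ]; linarith
  obtain ⟨i0, hi0⟩ := hs j
  have hmem : i0 ∈ Finset.univ.filter (fun i => s i = j) := by simp [hi0]
  have htD : p.2 i0 < D i0 := (ht i0).2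
  have ht0 : 0 < p.2 i0 := (ht i0).1
  have hDt : 0 < D i0 - p.2 i0 := by linarith
  set A := W i0 / (D i0 - p.2 i0) + δ with hA
  have hA0 : 0 < A := add_pos (div_pos (hW i0) hDt) hδ0
  have hAgt : W i0 / (D i0 - p.2 i0) < A := by simp [hA]; linarith
  set t' := D i0 - W i0 / A with ht'
  have hWA : 0 < W i0 / A := div_pos (hW i0) hA0
  have ht'D : t' < D i0 := by simp [ht']; linarith
  have hfrac : W i0 / A < D i0 - p.2 i0 := by
    rw [div_lt_iff₀ hA0]
    have := (div_lt_iff₀ hDt).1 hAgt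
    nlinarith [hW i0]
  have htt' : p.2 i0 < t' := by simp [ht']; linarith
  have hDt' : 0 < D i0 - t' := by linarith
  have hnew : W i0 / (D i0 - t') = A := by
    rw [ht']
    rw [sub_sub_cancel, div_div_cancel₀]
    · exact (hW i0).ne'
  set q : (ι → ℝ) × (ι → ℝ) := (p.1, Function.update p.2 i0 t') with hq
  have hq2 : ∀ i, i ≠ i0 → q.2 i = p.2 i := fun i hi => Function.update_of_ne hi _ _
  have hq2i0 : q.2 i0 = t' := Function.update_self i0 t' p.2
  have hqS : q ∈ S := by
    rw [hS]
    refine ⟨hx, ?_, hsum, ?_⟩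
    · intro i
      by_cases hi : i = i0
      · subst hi; rw [hq2i0]; exact ⟨ht0.trans htt', ht'D⟩
      · rw [hq2 i hi]; exact ht i
    · intro j'
      by_cases hj : j' = j
      · rw [hj]
        have hsplit : ∀ (f : ι → ℝ), ∑ i ∈ Finset.univ.filter (fun i => s i = j), f i =
            f i0 + ∑ i ∈ (Finset.univ.filter (fun i => s i = j)).erase i0, f i :=
          fun f => (Finset.add_sum_erase _ f hmem).symm
        rw [hsplit (fun i => W i / (D i - q.2 i))]
        have herase : ∑ i ∈ (Finset.univ.filter (fun i => s i = j)).erase i0,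
            W i / (D i - q.2 i) = ∑ i ∈ (Finset.univ.filter (fun i => s i = j)).erase i0,
            W i / (D i - p.2 i) := by
          refine Finset.sum_congr rfl fun i hi => ?_
          rw [hq2 i (Finset.ne_of_mem_erase hi)]
        rw [herase, hq2i0, hnew]
        have := hsplit (fun i => W i / (D i - p.2 i))
        rw [← hSig0] at this
        have : ∑ i ∈ (Finset.univ.filter (fun i => s i = j)).erase i0,
            W i / (D i - p.2 i) = Sig0 - W i0 / (D i0 - p.2 i0) := by linarith
        rw [this, hA, hδ]
        ring_nf
        linarith
      · have : ∑ i ∈ Finset.univ.filter (fun i => s i = j'), W i / (D i - q.2 i) =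
            ∑ i ∈ Finset.univ.filter (fun i => s i = j'), W i / (D i - p.2 i) := by
          refine Finset.sum_congr rfl fun i hi => ?_
          have : s i = j' := (Finset.mem_filter.1 hi).2
          have hii0 : i ≠ i0 := by rintro rfl; exact hj (this ▸ hi0 ▸ rfl)
          rw [hq2 i hii0]
        rw [this]; exact hcon j'
  have hFlt : F q < F p := by
    rw [hF]
    refine Finset.sum_lt_sum (fun i _ => ?_) ⟨i0, Finset.mem_univ i0, ?_⟩
    · by_cases hi : i = i0
      · subst hi
        rw [(rfl : q.1 = p.1), hq2i0]
        refine le_of_lt (mul_lt_mul_of_pos_left ?_ (div_pos hN0 (hh i)))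
        exact key (L i) (hL i) (mul_pos (hx i) ht0) (mul_lt_mul_of_pos_left htt' (hx i))
      · rw [hq2 i hi]
    · rw [(rfl : q.1 = p.1), hq2i0]
      refine mul_lt_mul_of_pos_left ?_ (div_pos hN0 (hh i0))
      have hxt : 0 < p.1 i0 * p.2 i0 := mul_pos (hx i0) ht0
      have hxt' : p.1 i0 * p.2 i0 < p.1 i0 * t' := mul_lt_mul_of_pos_left htt' (hx i0)
      exact key (L i0) (hL i0) hxt hxt'
  exact absurd (hopt q hqS) (not_le.2 hFlt)
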